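/- arXiv:1505.06610 — 3 statements merged into one kernel-verified Lean document; each statement's English description precedes it below -/
import Mathlib

section
/- If n_0, k_0 are nonnegative integers less than b^M with ‖n_0 ⊖ k_0‖_b = b^{d̃} (meaning n_0 ⊖ k_0 ∈ [b^{d̃}, b^{d̃+1})), then n_0 and k_0 lie in the same block [ṅ b^{d̃+1}, (ṅ+1) b^{d̃+1}) for some integer ṅ ≥ 0; i.e., ⌊n_0 / b^{d̃+1}⌋ = ⌊k_0 / b^{d̃+1}⌋. -/
open Finset
open scoped Classical

/-- The `j`-th `b`-adic digit of `x ∈ [0,1)` (for `j ≥ 1`). -/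
noncomputable def bdigit (b : ℕ) (x : ℝ) (j : ℕ) : ℕ := ⌊x * (b:ℝ)^j⌋₊ % b

/-- Truncation `[x]_m` to the first `m` `b`-adic digits. -/
noncomputable def btrunc (b m : ℕ) (x : ℝ) : ℝ :=
  ∑ j ∈ Finset.Icc 1 m, (bdigit b x j : ℝ) / (b:ℝ)^j

/-- Digitwise addition mod `b` : the `b`-adic digital shift `x ⊕ y`. -/
noncomputable def bshift (b : ℕ) (x y : ℝ) : ℝ :=
  ∑' j : ℕ, (((bdigit b x (j+1) + bdigit b y (j+1)) % b : ℕ) : ℝ) / (b:ℝ)^(j+1)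

/-- Digitwise subtraction mod `b` : `x ⊖ y`. -/
noncomputable def bsub (b : ℕ) (x y : ℝ) : ℝ :=
  ∑' j : ℕ, (((bdigit b x (j+1) + (b - bdigit b y (j+1))) % b : ℕ) : ℝ) / (b:ℝ)^(j+1)

/-- The `b`-adic valuation `‖x‖_b = b^{-k-1}` where the first `k` digits vanish;
`‖x‖_b = 0` if all digits vanish. -/
noncomputable def bval (b : ℕ) (x : ℝ) : ℝ :=
  if h : ∃ j : ℕ, bdigit b x (j+1) ≠ 0 then ((b:ℝ))⁻¹ ^ (Nat.find h + 1) else 0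

/-- Coordinatewise product valuation of a point of `[0,1)^s`. -/
noncomputable def bvalPt (b s : ℕ) (x : Fin s → ℝ) : ℝ := ∏ i, bval b (x i)

/-- Coordinatewise digitwise subtraction mod `b`. -/
noncomputable def bsubPt (b s : ℕ) (x y : Fin s → ℝ) : Fin s → ℝ := fun i => bsub b (x i) (y i)

/-- `E_m`: the set of `b`-adic rationals in `[0,1)` with denominator `b^m`. -/
def Eset (b m : ℕ) : Set ℝ :=
  {x | ∃ c : ℕ → ℕ, (∀ j, c j < b) ∧ x = ∑ j ∈ Finset.Icc 1 m, (c j : ℝ) / (b:ℝ)^j}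

/-- A `(t,m,s)`-net in base `b` (as a point family indexed by `n < b^m`): every
elementary `b`-adic interval of volume `≥ b^{t-m}` gets exactly its share of points. -/
def IsNet (b t m s : ℕ) (P : ℕ → Fin s → ℝ) : Prop :=
  ∀ d a : Fin s → ℕ, (∀ i, a i < b ^ d i) → (∑ i, d i) + t ≤ m →
    ((Finset.range (b^m)).filter (fun n => ∀ i,
      (a i : ℝ) / (b:ℝ)^(d i) ≤ P n i ∧ P n i < ((a i : ℝ) + 1) / (b:ℝ)^(d i))).card
      = b ^ (m - (∑ i, d i))

/-- A `(u,m,e,s)`-net in base `b` in the sense of Niederreiter–Xing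
(elementary intervals with `e i ∣ d i`). -/
def IsNetE (b u m s : ℕ) (e : Fin s → ℕ) (P : ℕ → Fin s → ℝ) : Prop :=
  ∀ d a : Fin s → ℕ, (∀ i, e i ∣ d i) → (∀ i, a i < b ^ d i) → (∑ i, d i) + u ≤ m →
    ((Finset.range (b^m)).filter (fun n => ∀ i,
      (a i : ℝ) / (b:ℝ)^(d i) ≤ P n i ∧ P n i < ((a i : ℝ) + 1) / (b:ℝ)^(d i))).card
      = b ^ (m - (∑ i, d i))

/-- A `(t,s)`-sequence in base `b`: the truncated points of every block of
length `b^m` (for `m > t`) form a `(t,m,s)`-net. -/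
def IsSeq (b t s : ℕ) (x : ℕ → Fin s → ℝ) : Prop :=
  ∀ k m : ℕ, t < m → IsNet b t m s (fun n i => btrunc b m (x (k * b^m + n) i))

/-- A `(u,e,s)`-sequence in base `b` in the sense of Niederreiter–Xing. -/
def IsSeqE (b u s : ℕ) (e : Fin s → ℕ) (x : ℕ → Fin s → ℝ) : Prop :=
  ∀ k m : ℕ, u < m → IsNetE b u m s e (fun n i => btrunc b m (x (k * b^m + n) i))

/-- The `j`-th base-`b` digit of a natural number. -/
def natDigit (b n j : ℕ) : ℕ := n / b^j % b

/-- Digitwise addition mod `b` of naturals, on the first `m` digits: `n ⊕ q`. -/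
def natShiftAdd (b m n q : ℕ) : ℕ :=
  ∑ j ∈ Finset.range m, ((natDigit b n j + natDigit b q j) % b) * b^j

/-- Digitwise subtraction mod `b` of naturals, on the first `m` digits: `n ⊖ q`. -/
def natShiftSub (b m n q : ℕ) : ℕ :=
  ∑ j ∈ Finset.range m, ((natDigit b n j + (b - natDigit b q j)) % b) * b^j

/-- Digitwise subtraction mod `b` of naturals (all digits). -/
def natSub (b n k : ℕ) : ℕ := natShiftSub b (n + k + 1) n k

/-- `‖n‖_b = b^k` for `n ∈ [b^k, b^{k+1})`. -/
def natVal (b n : ℕ) : ℕ := b ^ Nat.log b n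

/-- A `d`-admissible point set `(x_n)_{0 ≤ n < b^m}` in base `b`. -/
def AdmissiblePtSet (b d m s : ℕ) (x : ℕ → Fin s → ℝ) : Prop :=
  ∀ k n : ℕ, k < n → n < b^m →
    bvalPt b s (bsubPt b s (x n) (x k)) > ((b:ℝ))⁻¹ ^ (m + d)

/-- A `d`-admissible sequence in base `b`. -/
def AdmissibleSeq (b d s : ℕ) (x : ℕ → Fin s → ℝ) : Prop :=
  ∀ n k : ℕ, k < n →
    (natVal b (natSub b n k) : ℝ) * bvalPt b s (bsubPt b s (x n) (x k)) ≥ ((b:ℝ))⁻¹ ^ d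

/-- Star discrepancy of the first `N` points of `y`, with anchored boxes `[0,γ)`. -/
noncomputable def starDisc (s N : ℕ) (y : ℕ → Fin s → ℝ) : ℝ :=
  sSup {v : ℝ | ∃ γ : Fin s → ℝ, (∀ i, 0 < γ i ∧ γ i ≤ 1) ∧
    v = |(((Finset.range N).filter (fun n => ∀ i, y n i < γ i)).card : ℝ)
          - (N : ℝ) * ∏ i, γ i| / (N : ℝ)}

/-- Two naturals with equal base-`b` digits are equal. -/
lemma natDigit_ext (b : ℕ) (hb : 2 ≤ b) :
    ∀ x y : ℕ, (∀ j, natDigit b x j = natDigit b y j) → x = y := by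
  intro x
  induction x using Nat.strong_induction_on with
  | _ x ih =>
    intro y h
    rcases Nat.eq_zero_or_pos x with hx | hx
    · subst hx
      by_contra hy
      have hy' : 0 < y := Nat.pos_of_ne_zero fun h0 => hy (h0 ▸ rfl)
      have := h (Nat.log b y)
      simp only [natDigit, pow_zero] at this
      have h1 : 1 ≤ y / b ^ Nat.log b y := (Nat.one_le_div_iff (Nat.pow_pos (by omega))).2
        (Nat.pow_log_le_self b (by omega))
      have h2 : y / b ^ Nat.log b y < b :=
        Nat.div_lt_of_lt_mul (by
          have := Nat.lt_pow_succ_log_self (by omega : 1 < b) y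
          calc y < b ^ (Nat.log b y + 1) := this
            _ = b ^ Nat.log b y * b := by ring)
      rw [Nat.zero_div, Nat.zero_mod, Nat.mod_eq_of_lt h2] at this
      omega
    · have hb0 : 0 < b := by omega
      have hdiv : x / b = y / b := by
        apply ih (x / b) (Nat.div_lt_self hx (by omega))
        intro j
        have := h (j + 1)
        simpa [natDigit, pow_succ, Nat.div_div_eq_div_mul, mul_comm] using this
      have hmod : x % b = y % b := by
        have := h 0
        simpa [natDigit] using this
      have hx' := Nat.div_add_mod x b
      have hy' := Nat.div_add_mod y b
      rw [hdiv, hmod] at hx'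
      omega

/-- if `‖n₀ ⊖ k₀‖_b = b^{d̃}` then `n₀` and `k₀` lie in the same
block of length `b^{d̃+1}`. -/
theorem stmt_6 (b M : ℕ) (hb : 2 ≤ b) (n0 k0 : ℕ)
    (hn : n0 < b^M) (hk : k0 < b^M) (dt : ℕ)
    (h1 : b ^ dt ≤ natShiftSub b M n0 k0)
    (h2 : natShiftSub b M n0 k0 < b ^ (dt+1)) :
    n0 / b^(dt+1) = k0 / b^(dt+1) := by
  have hb0 : 0 < b := by omega
  -- each term of the sum is ≤ the sum
  have hterm : ∀ j, j ∈ Finset.range M →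
      ((natDigit b n0 j + (b - natDigit b k0 j)) % b) * b^j ≤ natShiftSub b M n0 k0 := by
    intro j hj
    exact Finset.single_le_sum (f := fun j => ((natDigit b n0 j + (b - natDigit b k0 j)) % b) * b^j)
      (fun _ _ => Nat.zero_le _) hj
  -- digits of n0 and k0 agree for j ≥ dt+1
  have hdig : ∀ j, dt + 1 ≤ j → natDigit b n0 j = natDigit b k0 j := by
    intro j hj
    by_cases hjM : j < M
    · have h3 : ((natDigit b n0 j + (b - natDigit b k0 j)) % b) * b^j < b^(dt+1) :=
        lt_of_le_of_lt (hterm j (Finset.mem_range.2 hjM)) h2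
      have h4 : b^(dt+1) ≤ b^j := Nat.pow_le_pow_right hb0 hj
      have h5 : ((natDigit b n0 j + (b - natDigit b k0 j)) % b) * b^j < 1 * b^j := by
        omega
      have h6 : (natDigit b n0 j + (b - natDigit b k0 j)) % b = 0 := by
        have := Nat.lt_of_mul_lt_mul_right h5
        omega
      have hnd : natDigit b n0 j < b := Nat.mod_lt _ hb0
      have hkd : natDigit b k0 j < b := Nat.mod_lt _ hb0
      -- sum ∈ [1, 2b-1], divisible by b ⇒ = b ⇒ digits equal
      have hsum : natDigit b n0 j + (b - natDigit b k0 j) = b := by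
        have h7 : 1 ≤ natDigit b n0 j + (b - natDigit b k0 j) := by omega
        have h8 : natDigit b n0 j + (b - natDigit b k0 j) < 2 * b := by omega
        rcases Nat.lt_or_ge (natDigit b n0 j + (b - natDigit b k0 j)) b with h | h
        · rw [Nat.mod_eq_of_lt h] at h6; omega
        · have h9 : (natDigit b n0 j + (b - natDigit b k0 j)) - b < b := by omega
          have h10 : (natDigit b n0 j + (b - natDigit b k0 j)) % b
              = (natDigit b n0 j + (b - natDigit b k0 j)) - b := by
            rw [Nat.mod_eq_sub_mod h, Nat.mod_eq_of_lt h9]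
          omega
      omega
    · have hMj : b ^ M ≤ b ^ j := Nat.pow_le_pow_right hb0 (by omega)
      have hn0 : n0 / b^j = 0 := Nat.div_eq_of_lt (lt_of_lt_of_le hn hMj)
      have hk0 : k0 / b^j = 0 := Nat.div_eq_of_lt (lt_of_lt_of_le hk hMj)
      simp [natDigit, hn0, hk0]
  apply natDigit_ext b hb
  intro j
  simp only [natDigit, Nat.div_div_eq_div_mul, ← pow_add]
  exact hdig (dt + 1 + j) (by omega)
end

section
/- If (x_n)_{n ≥ 0} is a (t,s)-sequence in base b, then for every m > t the point set ((x_n, n/b^m))_{0 ≤ n < b^m} in [0,1)^{s+1} is a (t, m, s+1)-net in base b. -/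
open Finset
open scoped Classical

section Aux

private lemma aux_le_iff (b d m : ℕ) (hb : 0 < b) (hd : d ≤ m) (c : ℕ) (x : ℝ)
    (hx0 : 0 ≤ x) :
    (c:ℝ)/(b:ℝ)^d ≤ x ↔ c * b^(m-d) ≤ ⌊x * (b:ℝ)^m⌋₊ := by
  have hbR : (0:ℝ) < b := by exact_mod_cast hb
  have hpow : (b:ℝ)^m = (b:ℝ)^d * (b:ℝ)^(m-d) := by
    rw [← pow_add, Nat.add_sub_cancel' hd]
  rw [Nat.le_floor_iff (by positivity), div_le_iff₀ (by positivity), hpow]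
  push_cast
  rw [← mul_assoc]
  exact (mul_le_mul_iff_of_pos_right (by positivity)).symm

private lemma btrunc_floor (b m : ℕ) (hb : 0 < b) (x : ℝ) (hx : x ∈ Set.Ico (0:ℝ) 1) :
    btrunc b m x = (⌊x * (b:ℝ)^m⌋₊ : ℝ) / (b:ℝ)^m := by
  have hbR : (0:ℝ) < b := by exact_mod_cast hb
  induction m with
  | zero =>
    simp [btrunc, Nat.floor_eq_zero.2 (by simpa using hx.2)]
  | succ m ih =>
    have hstep : btrunc b (m+1) x = btrunc b m x + (bdigit b x (m+1) : ℝ) / (b:ℝ)^(m+1) := by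
      unfold btrunc
      rw [Finset.sum_Icc_succ_top (by omega)]
    have hdiv : ⌊x * (b:ℝ)^(m+1)⌋₊ / b = ⌊x * (b:ℝ)^m⌋₊ := by
      rw [← Nat.floor_div_natCast]
      congr 1
      field_simp
      ring
    have hmod : ((⌊x * (b:ℝ)^(m+1)⌋₊ % b : ℕ) : ℝ)
        = (⌊x * (b:ℝ)^(m+1)⌋₊ : ℝ) - (b:ℝ) * (⌊x * (b:ℝ)^m⌋₊ : ℝ) := by
      rw [← hdiv]
      have := Nat.mod_add_div (⌊x * (b:ℝ)^(m+1)⌋₊) b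
      have h2 : ((⌊x * (b:ℝ)^(m+1)⌋₊ % b + b * (⌊x * (b:ℝ)^(m+1)⌋₊ / b) : ℕ) : ℝ)
          = (⌊x * (b:ℝ)^(m+1)⌋₊ : ℝ) := by exact_mod_cast congrArg Nat.cast this
      push_cast at h2
      linarith
    rw [hstep, ih]
    unfold bdigit
    rw [hmod]
    have hb1 : (b:ℝ)^(m+1) ≠ 0 := by positivity
    have hb2 : (b:ℝ)^m ≠ 0 := by positivity
    field_simp
    ring

private lemma floor_btrunc (b m : ℕ) (hb : 0 < b) (x : ℝ) (hx : x ∈ Set.Ico (0:ℝ) 1) :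
    ⌊btrunc b m x * (b:ℝ)^m⌋₊ = ⌊x * (b:ℝ)^m⌋₊ := by
  have hbR : (0:ℝ) < b := by exact_mod_cast hb
  rw [btrunc_floor b m hb x hx, div_mul_cancel₀ _ (by positivity : ((b:ℝ)^m) ≠ 0),
    Nat.floor_natCast]

private lemma btrunc_nonneg (b m : ℕ) (hb : 0 < b) (x : ℝ) (hx : x ∈ Set.Ico (0:ℝ) 1) :
    0 ≤ btrunc b m x := by
  have hbR : (0:ℝ) < b := by exact_mod_cast hb
  rw [btrunc_floor b m hb x hx]
  positivity

private lemma trunc_le_iff (b d m : ℕ) (hb : 0 < b) (hd : d ≤ m) (c : ℕ) (x : ℝ)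
    (hx : x ∈ Set.Ico (0:ℝ) 1) :
    (c:ℝ)/(b:ℝ)^d ≤ btrunc b m x ↔ (c:ℝ)/(b:ℝ)^d ≤ x := by
  rw [aux_le_iff b d m hb hd c _ (btrunc_nonneg b m hb x hx),
    aux_le_iff b d m hb hd c x hx.1, floor_btrunc b m hb x hx]

private lemma forall_fin_snoc {s : ℕ} (p : Fin (s+1) → Prop) :
    (∀ i, p i) ↔ (∀ j : Fin s, p j.castSucc) ∧ p (Fin.last s) := by
  constructor
  · exact fun h => ⟨fun j => h _, h _⟩
  · rintro ⟨h1, h2⟩ i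
    induction i using Fin.lastCases with
    | last => exact h2
    | cast j => exact h1 j

end Aux

/-- if `(x_n)` is a `(t,s)`-sequence in base `b`, then for every
`m > t` the point set `((x_n, n/b^m))_{0 ≤ n < b^m}` is a `(t,m,s+1)`-net. -/
theorem stmt_11 (b t s m : ℕ) (hb : 2 ≤ b) (x : ℕ → Fin s → ℝ)
    (hx : ∀ n i, x n i ∈ Set.Ico (0:ℝ) 1) (hseq : IsSeq b t s x) (hm : t < m) :
    IsNet b t m (s+1) (fun n => Fin.snoc (x n) ((n:ℝ)/(b:ℝ)^m)) := by
  intro d a ha hsum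
  have hb0 : 0 < b := by omega
  have hbR : (0:ℝ) < b := by exact_mod_cast hb0
  set dL := d (Fin.last s) with hdLdef
  set aL := a (Fin.last s) with haLdef
  have hsum_split : ∑ i, d i = (∑ j : Fin s, d j.castSucc) + dL := Fin.sum_univ_castSucc d
  set S' := ∑ j : Fin s, d j.castSucc with hS'def
  have hdLm : dL + t ≤ m := by omega
  set m' := m - dL with hm'def
  have hS'm' : S' + t ≤ m' := by omega
  set N0 := aL * b ^ m' with hN0def
  have hsucc : (aL + 1) * b ^ m' = N0 + b ^ m' := by rw [hN0def]; ring
  have hub : (aL + 1) * b ^ m' ≤ b ^ m := by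
    have h1 : aL + 1 ≤ b ^ dL := ha (Fin.last s)
    calc (aL+1)*b^m' ≤ b^dL * b^m' := Nat.mul_le_mul_right _ h1
      _ = b ^ m := by rw [← pow_add]; congr 1; omega
  have hdj : ∀ j : Fin s, d j.castSucc ≤ m' := by
    intro j
    have : d j.castSucc ≤ S' := Finset.single_le_sum (f := fun j : Fin s => d j.castSucc)
      (fun i _ => Nat.zero_le _) (Finset.mem_univ j)
    omega
  -- truncation does not change membership in the elementary intervals
  have hxcond : ∀ (n : ℕ) (j : Fin s),
      ((a j.castSucc : ℝ)/(b:ℝ)^(d j.castSucc) ≤ btrunc b m' (x n j) ∧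
        btrunc b m' (x n j) < ((a j.castSucc:ℝ)+1)/(b:ℝ)^(d j.castSucc))
      ↔ ((a j.castSucc : ℝ)/(b:ℝ)^(d j.castSucc) ≤ x n j ∧
        x n j < ((a j.castSucc:ℝ)+1)/(b:ℝ)^(d j.castSucc)) := by
    intro n j
    have h1 := trunc_le_iff b (d j.castSucc) m' hb0 (hdj j) (a j.castSucc) (x n j) (hx n j)
    have h2 := trunc_le_iff b (d j.castSucc) m' hb0 (hdj j) (a j.castSucc + 1) (x n j) (hx n j)
    push_cast at h2
    refine and_congr h1 ?_
    rw [← not_le, ← not_le]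
    exact not_congr h2
  -- the condition on the extra coordinate
  have hfloor_n : ∀ n : ℕ, ⌊((n:ℝ)/(b:ℝ)^m) * (b:ℝ)^m⌋₊ = n := by
    intro n
    rw [div_mul_cancel₀ _ (by positivity : ((b:ℝ)^m) ≠ 0), Nat.floor_natCast]
  have hlast : ∀ n : ℕ,
      ((aL:ℝ)/(b:ℝ)^dL ≤ (n:ℝ)/(b:ℝ)^m ∧ (n:ℝ)/(b:ℝ)^m < ((aL:ℝ)+1)/(b:ℝ)^dL)
      ↔ (N0 ≤ n ∧ n < (aL+1)*b^m') := by
    intro n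
    have h1 := aux_le_iff b dL m hb0 (by omega) aL ((n:ℝ)/(b:ℝ)^m) (by positivity)
    have h2 := aux_le_iff b dL m hb0 (by omega) (aL+1) ((n:ℝ)/(b:ℝ)^m) (by positivity)
    rw [hfloor_n n] at h1 h2
    push_cast at h2
    refine and_congr h1 ?_
    rw [← not_le, ← Nat.not_le]
    exact not_congr h2
  -- rewrite the filter predicate
  have hpred : ((Finset.range (b^m)).filter (fun n => ∀ i : Fin (s+1),
      (a i : ℝ) / (b:ℝ)^(d i) ≤ (Fin.snoc (x n) ((n:ℝ)/(b:ℝ)^m) : Fin (s+1) → ℝ) i ∧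
      (Fin.snoc (x n) ((n:ℝ)/(b:ℝ)^m) : Fin (s+1) → ℝ) i < ((a i : ℝ) + 1) / (b:ℝ)^(d i)))
      = (Finset.range (b^m)).filter (fun n =>
        (N0 ≤ n ∧ n < (aL+1)*b^m') ∧ ∀ j : Fin s,
        (a j.castSucc : ℝ)/(b:ℝ)^(d j.castSucc) ≤ x n j ∧
        x n j < ((a j.castSucc:ℝ)+1)/(b:ℝ)^(d j.castSucc)) := by
    apply Finset.filter_congr
    intro n _
    rw [forall_fin_snoc]
    simp only [Fin.snoc_castSucc, Fin.snoc_last]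
    rw [hlast n, and_comm]
  beta_reduce
  rw [hpred]
  -- bijection with a block of length b^m'
  have hcard : ((Finset.range (b^m)).filter (fun n =>
        (N0 ≤ n ∧ n < (aL+1)*b^m') ∧ ∀ j : Fin s,
        (a j.castSucc : ℝ)/(b:ℝ)^(d j.castSucc) ≤ x n j ∧
        x n j < ((a j.castSucc:ℝ)+1)/(b:ℝ)^(d j.castSucc))).card
      = ((Finset.range (b^m')).filter (fun n' => ∀ j : Fin s,
        (a j.castSucc : ℝ)/(b:ℝ)^(d j.castSucc) ≤ x (N0 + n') j ∧
        x (N0 + n') j < ((a j.castSucc:ℝ)+1)/(b:ℝ)^(d j.castSucc))).card := by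
    apply Finset.card_bij' (i := fun n _ => n - N0) (j := fun n' _ => N0 + n')
    · intro n hn
      simp only [Finset.mem_filter, Finset.mem_range] at hn ⊢
      obtain ⟨hn1, ⟨hge, hlt⟩, hΦ⟩ := hn
      refine ⟨by omega, ?_⟩
      rw [Nat.add_sub_cancel' hge]
      exact hΦ
    · intro n' hn'
      simp only [Finset.mem_filter, Finset.mem_range] at hn' ⊢
      obtain ⟨hn1, hΦ⟩ := hn'
      exact ⟨by omega, ⟨by omega, by omega⟩, hΦ⟩
    · intro n hn
      simp only [Finset.mem_filter, Finset.mem_range] at hn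
      omega
    · intro n' _
      omega
  rw [hcard]
  -- the block count
  have hfinal : m - ∑ i, d i = m' - S' := by omega
  rw [hfinal]
  by_cases hcase : t < m'
  · have hnet := hseq aL m' hcase (fun j => d j.castSucc) (fun j => a j.castSucc)
      (fun j => ha j.castSucc) hS'm'
    rw [← hnet]
    congr 1
    apply Finset.filter_congr
    intro n _
    constructor
    · intro h j; exact (hxcond (N0 + n) j).2 (h j)
    · intro h j; exact (hxcond (N0 + n) j).1 (h j)
  · -- degenerate case: m' = t, all d_j = 0
    have hS'0 : S' = 0 := by omega
    have hm't : m' = t := by omega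
    have hd0 : ∀ j : Fin s, d j.castSucc = 0 := by
      intro j
      have := hdj j
      have h2 : d j.castSucc ≤ S' := Finset.single_le_sum (f := fun j : Fin s => d j.castSucc)
        (fun i _ => Nat.zero_le _) (Finset.mem_univ j)
      omega
    have ha0 : ∀ j : Fin s, a j.castSucc = 0 := by
      intro j
      have := ha j.castSucc
      rw [hd0 j, pow_zero] at this
      omega
    rw [Finset.filter_true_of_mem, Finset.card_range, hS'0, Nat.sub_zero]
    intro n _ j
    rw [hd0 j, ha0 j]
    have := hx (N0 + n) j
    simp only [pow_zero, Nat.cast_zero, zero_div, div_one, zero_add]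
    exact ⟨this.1, this.2⟩
end

section
/- Roth-type truncation lemma (cited as [3, Lemma 3.7]): for any sequence (y_n)_{n≥0} in [0,1)^s and any m ≥ 1, 1 + sup_{1 ≤ N ≤ b^m} N·D*((y_n)_{n=0}^{N−1}) ≥ b^m · D*(((y_n, n/b^m))_{n=0}^{b^m−1}), where the right-hand side is the star discrepancy of the (s+1)-dimensional point set appending the coordinate n/b^m. -/
open Finset
open scoped Classical

/-- Elements of the star-discrepancy set are nonnegative. -/
lemma starDisc_set_nonneg (s N : ℕ) (y : ℕ → Fin s → ℝ) :
    ∀ v ∈ {v : ℝ | ∃ γ : Fin s → ℝ, (∀ i, 0 < γ i ∧ γ i ≤ 1) ∧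
      v = |(((Finset.range N).filter (fun n => ∀ i, y n i < γ i)).card : ℝ)
            - (N : ℝ) * ∏ i, γ i| / (N : ℝ)}, 0 ≤ v := by
  rintro v ⟨γ, hγ, rfl⟩
  positivity

lemma starDisc_nonneg (s N : ℕ) (y : ℕ → Fin s → ℝ) : 0 ≤ starDisc s N y := by
  apply Real.sSup_nonneg
  exact starDisc_set_nonneg s N y

/-- Elements of the star-discrepancy set are at most 2 (for `N ≥ 1`). -/
lemma starDisc_set_le_two (s N : ℕ) (hN : 1 ≤ N) (y : ℕ → Fin s → ℝ) :
    ∀ v ∈ {v : ℝ | ∃ γ : Fin s → ℝ, (∀ i, 0 < γ i ∧ γ i ≤ 1) ∧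
      v = |(((Finset.range N).filter (fun n => ∀ i, y n i < γ i)).card : ℝ)
            - (N : ℝ) * ∏ i, γ i| / (N : ℝ)}, v ≤ 2 := by
  rintro v ⟨γ, hγ, rfl⟩
  have hNpos : (0:ℝ) < N := by exact_mod_cast hN
  have hc : (((Finset.range N).filter (fun n => ∀ i, y n i < γ i)).card : ℝ) ≤ N := by
    have h := Finset.card_filter_le (Finset.range N) (fun n => ∀ i, y n i < γ i)
    rw [Finset.card_range] at h
    exact_mod_cast h
  have hp0 : (0:ℝ) ≤ ∏ i, γ i := Finset.prod_nonneg fun i _ => (hγ i).1.le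
  have hp1 : ∏ i, γ i ≤ 1 := Finset.prod_le_one (fun i _ => (hγ i).1.le) (fun i _ => (hγ i).2)
  rw [div_le_iff₀ hNpos]
  have hc0 : (0:ℝ) ≤ (((Finset.range N).filter (fun n => ∀ i, y n i < γ i)).card : ℝ) :=
    Nat.cast_nonneg _
  have habs : |(((Finset.range N).filter (fun n => ∀ i, y n i < γ i)).card : ℝ)
      - (N : ℝ) * ∏ i, γ i| ≤ 2 * N := by
    rw [abs_le]
    constructor
    · nlinarith
    · nlinarith
  linarith

lemma starDisc_bddAbove (s N : ℕ) (hN : 1 ≤ N) (y : ℕ → Fin s → ℝ) :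
    BddAbove {v : ℝ | ∃ γ : Fin s → ℝ, (∀ i, 0 < γ i ∧ γ i ≤ 1) ∧
      v = |(((Finset.range N).filter (fun n => ∀ i, y n i < γ i)).card : ℝ)
            - (N : ℝ) * ∏ i, γ i| / (N : ℝ)} :=
  ⟨2, starDisc_set_le_two s N hN y⟩

lemma starDisc_le_two (s N : ℕ) (hN : 1 ≤ N) (y : ℕ → Fin s → ℝ) :
    starDisc s N y ≤ 2 :=
  Real.sSup_le (starDisc_set_le_two s N hN y) (by norm_num)

/-- Roth-type truncation lemma, [3, Lemma 3.7]:
`1 + sup_{1 ≤ N ≤ b^m} N·D*((y_n)_{n<N}) ≥ b^m · D*(((y_n, n/b^m))_{n<b^m})`. -/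
theorem stmt_18 (b m s : ℕ) (hb : 2 ≤ b) (hm : 1 ≤ m)
    (y : ℕ → Fin s → ℝ) (hy : ∀ n i, y n i ∈ Set.Ico (0:ℝ) 1) :
    1 + sSup {v : ℝ | ∃ N : ℕ, 1 ≤ N ∧ N ≤ b^m ∧
        v = (N : ℝ) * starDisc s N y}
      ≥ (b^m : ℝ) * starDisc (s+1) (b^m)
          (fun n => Fin.snoc (y n) ((n:ℝ)/(b:ℝ)^m)) := by
  have hb0 : 0 < b := by omega
  have hbm : (0:ℝ) < (b:ℝ)^m := by positivity
  have hbmN : 0 < b ^ m := Nat.pow_pos hb0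
  set T := {v : ℝ | ∃ N : ℕ, 1 ≤ N ∧ N ≤ b^m ∧ v = (N : ℝ) * starDisc s N y} with hT
  have hTnonneg : 0 ≤ sSup T := by
    apply Real.sSup_nonneg
    rintro v ⟨N, hN1, hN2, rfl⟩
    exact mul_nonneg (Nat.cast_nonneg N) (starDisc_nonneg s N y)
  have hTbdd : BddAbove T := by
    refine ⟨((b^m : ℕ) : ℝ) * 2, ?_⟩
    rintro v ⟨N, hN1, hN2, rfl⟩
    have h1 : (N:ℝ) ≤ ((b^m:ℕ):ℝ) := by exact_mod_cast hN2
    have h2 := starDisc_le_two s N hN1 y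
    have h3 := starDisc_nonneg s N y
    nlinarith
  rw [ge_iff_le]
  have key : starDisc (s+1) (b^m) (fun n => Fin.snoc (y n) ((n:ℝ)/(b:ℝ)^m))
      ≤ (1 + sSup T) / (b:ℝ)^m := by
    apply Real.sSup_le
    · rintro v ⟨γ, hγ, rfl⟩
      set N : ℕ := ⌈(b:ℝ)^m * γ (Fin.last s)⌉₊ with hNdef
      have hγl : 0 < γ (Fin.last s) := (hγ (Fin.last s)).1
      have hγl1 : γ (Fin.last s) ≤ 1 := (hγ (Fin.last s)).2
      have hN1 : 1 ≤ N := Nat.ceil_pos.mpr (by positivity)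
      have hN2 : N ≤ b^m := by
        rw [hNdef, Nat.ceil_le]
        push_cast
        nlinarith
      set γ' : Fin s → ℝ := fun i => γ i.castSucc with hγ'def
      have hγ'h : ∀ i, 0 < γ' i ∧ γ' i ≤ 1 := fun i => hγ i.castSucc
      have hfilter : (Finset.range (b^m)).filter
            (fun n => ∀ i, (Fin.snoc (y n) ((n:ℝ)/(b:ℝ)^m) : Fin (s+1) → ℝ) i < γ i)
          = (Finset.range N).filter (fun n => ∀ i : Fin s, y n i < γ' i) := by
        ext n
        simp only [Finset.mem_filter, Finset.mem_range]
        constructor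
        · rintro ⟨hn, h⟩
          have hlast := h (Fin.last s)
          rw [Fin.snoc_last] at hlast
          have hnN : n < N := by
            rw [hNdef, Nat.lt_ceil]
            rw [div_lt_iff₀ hbm] at hlast
            linarith [hlast]
          refine ⟨hnN, fun i => ?_⟩
          have := h i.castSucc
          rwa [Fin.snoc_castSucc] at this
        · rintro ⟨hn, h⟩
          refine ⟨lt_of_lt_of_le hn hN2, fun i => ?_⟩
          refine Fin.lastCases ?_ ?_ i
          · rw [Fin.snoc_last, div_lt_iff₀ hbm]
            have : (n:ℝ) < N := by exact_mod_cast hn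
            have hle : (N:ℝ) ≤ (b:ℝ)^m * γ (Fin.last s) + 1 := by
              have := Nat.ceil_lt_add_one (a := (b:ℝ)^m * γ (Fin.last s)) (by positivity)
              rw [← hNdef] at this
              linarith
            -- n < N ≤ b^m γ + 1, n integer so n ≤ N-1 < b^m γ ... careful
            have hn1 : (n:ℝ) + 1 ≤ (N:ℝ) := by exact_mod_cast hn
            have hceil : (b:ℝ)^m * γ (Fin.last s) ≤ N := Nat.le_ceil _
            -- we need (n:ℝ) < b^m * γ. We know n+1 ≤ N and N < b^m γ + 1
            have hlt : (N:ℝ) < (b:ℝ)^m * γ (Fin.last s) + 1 := by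
              have := Nat.ceil_lt_add_one (a := (b:ℝ)^m * γ (Fin.last s)) (by positivity)
              rw [← hNdef] at this
              exact this
            linarith
          · intro i
            rw [Fin.snoc_castSucc]
            exact h i
      set c : ℝ := (((Finset.range N).filter (fun n => ∀ i : Fin s, y n i < γ' i)).card : ℝ)
        with hcdef
      have hprod : ∏ i, γ i = (∏ i : Fin s, γ' i) * γ (Fin.last s) :=
        Fin.prod_univ_castSucc γ
      have hp0 : (0:ℝ) ≤ ∏ i : Fin s, γ' i :=
        Finset.prod_nonneg fun i _ => (hγ'h i).1.le
      have hp1 : (∏ i : Fin s, γ' i) ≤ 1 :=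
        Finset.prod_le_one (fun i _ => (hγ'h i).1.le) (fun i _ => (hγ'h i).2)
      have hNpos : (0:ℝ) < N := by exact_mod_cast hN1
      -- the element of the starDisc set for (s, N, y)
      have hmem : |c - (N:ℝ) * ∏ i : Fin s, γ' i| / (N:ℝ) ≤ starDisc s N y := by
        apply le_csSup (starDisc_bddAbove s N hN1 y)
        exact ⟨γ', hγ'h, rfl⟩
      have hstep1 : |c - (N:ℝ) * ∏ i : Fin s, γ' i| ≤ (N:ℝ) * starDisc s N y := by
        rw [div_le_iff₀ hNpos] at hmem
        linarith [hmem]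
      have hstep2 : (N:ℝ) * starDisc s N y ≤ sSup T :=
        le_csSup hTbdd ⟨N, hN1, hN2, rfl⟩
      have hceil1 : (b:ℝ)^m * γ (Fin.last s) ≤ N := Nat.le_ceil _
      have hceil2 : (N:ℝ) < (b:ℝ)^m * γ (Fin.last s) + 1 := by
        have := Nat.ceil_lt_add_one (a := (b:ℝ)^m * γ (Fin.last s)) (by positivity)
        rw [← hNdef] at this
        exact this
      have hmain : |c - ((b^m : ℕ):ℝ) * ∏ i, γ i| ≤ 1 + sSup T := by
        have hcast : ((b^m : ℕ):ℝ) = (b:ℝ)^m := by push_cast; ring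
        rw [hcast, hprod]
        have h2 : |(N:ℝ) * (∏ i : Fin s, γ' i)
            - (b:ℝ)^m * ((∏ i : Fin s, γ' i) * γ (Fin.last s))| ≤ 1 := by
          have : (b:ℝ)^m * ((∏ i : Fin s, γ' i) * γ (Fin.last s))
              = ((b:ℝ)^m * γ (Fin.last s)) * (∏ i : Fin s, γ' i) := by ring
          rw [this, ← sub_mul, abs_mul, abs_of_nonneg hp0]
          have habs : |(N:ℝ) - (b:ℝ)^m * γ (Fin.last s)| ≤ 1 := by
            rw [abs_le]; constructor <;> linarith
          nlinarith [abs_nonneg ((N:ℝ) - (b:ℝ)^m * γ (Fin.last s))]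
        calc |c - (b:ℝ)^m * ((∏ i : Fin s, γ' i) * γ (Fin.last s))|
            ≤ |c - (N:ℝ) * ∏ i : Fin s, γ' i|
              + |(N:ℝ) * (∏ i : Fin s, γ' i)
                - (b:ℝ)^m * ((∏ i : Fin s, γ' i) * γ (Fin.last s))| := by
              have := abs_sub_le (c) ((N:ℝ) * ∏ i : Fin s, γ' i)
                ((b:ℝ)^m * ((∏ i : Fin s, γ' i) * γ (Fin.last s)))
              exact this
          _ ≤ sSup T + 1 := by linarith
          _ = 1 + sSup T := by ring
      rw [hfilter, ← hcdef]
      rw [div_le_div_iff₀ (by exact_mod_cast hbmN) hbm]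
      have hcast2 : ((b^m : ℕ):ℝ) = (b:ℝ)^m := by push_cast; ring
      rw [hcast2] at hmain
      rw [hcast2]
      nlinarith [mul_le_mul_of_nonneg_right hmain hbm.le]
    · positivity
  calc ((b:ℝ)^m) * starDisc (s+1) (b^m) (fun n => Fin.snoc (y n) ((n:ℝ)/(b:ℝ)^m))
      ≤ ((b:ℝ)^m) * ((1 + sSup T) / (b:ℝ)^m) := by
        exact mul_le_mul_of_nonneg_left key hbm.le
    _ = 1 + sSup T := by field_simp
end
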